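/- lim_{y → 0⁺} (1/π) ∫_a^b ( ∫_{(0,∞)} y/((u − x)² + y²) dτ(u) ) dx = τ((a, b)). (Stieltjes–Perron inversion for a finite signed measure: the limit of the integrated imaginary part of the Cauchy–Stieltjes transform over (a, b) recovers the measure of the open interval.) -/

import Mathlib

open MeasureTheory Real Filter Set intervalIntegral


lemma tendsto_arctan_div_pos' {c : ℝ} (hc : 0 < c) :
    Filter.Tendsto (fun y : ℝ => arctan (c / y)) (nhdsWithin 0 (Set.Ioi 0)) (nhds (π / 2)) := by
  have h1 : Filter.Tendsto (fun y : ℝ => c / y) (nhdsWithin 0 (Set.Ioi 0)) atTop := by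
    simpa [div_eq_mul_inv] using tendsto_inv_nhdsGT_zero.const_mul_atTop hc
  exact (tendsto_arctan_atTop.mono_right nhdsWithin_le_nhds).comp h1

lemma tendsto_arctan_div_neg' {c : ℝ} (hc : c < 0) :
    Filter.Tendsto (fun y : ℝ => arctan (c / y)) (nhdsWithin 0 (Set.Ioi 0)) (nhds (-(π / 2))) := by
  have h1 : Filter.Tendsto (fun y : ℝ => c / y) (nhdsWithin 0 (Set.Ioi 0)) atBot := by
    simpa [div_eq_mul_inv] using tendsto_inv_nhdsGT_zero.const_mul_atTop_of_neg hc
  exact (tendsto_arctan_atBot.mono_right nhdsWithin_le_nhds).comp h1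

lemma poisson_integral_x {y : ℝ} (hy : 0 < y) (u a b : ℝ) :
    ∫ x in a..b, y / ((u - x) ^ 2 + y ^ 2) =
      arctan ((b - u) / y) - arctan ((a - u) / y) := by
  have hderiv : ∀ x : ℝ, HasDerivAt (fun x => arctan ((x - u) / y))
      (y / ((u - x) ^ 2 + y ^ 2)) x := by
    intro x
    have h : HasDerivAt (fun x : ℝ => (x - u) / y) (1 / y) x := by
      simpa using ((hasDerivAt_id x).sub_const u).div_const y
    have := h.arctan
    convert this using 1
    have h1 : (u - x) ^ 2 + y ^ 2 ≠ 0 := by positivity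
    field_simp
    ring
  have hcont : Continuous fun x => y / ((u - x) ^ 2 + y ^ 2) := by
    apply continuous_const.div (by fun_prop)
    intro x; positivity
  rw [intervalIntegral.integral_eq_sub_of_hasDerivAt (fun x _ => hderiv x)
    (hcont.intervalIntegrable a b)]

lemma poisson_cont_in_x {y : ℝ} (hy : 0 < y) (μ : Measure ℝ) [IsFiniteMeasure μ] :
    Continuous fun x : ℝ => ∫ u : ℝ, y / ((u - x) ^ 2 + y ^ 2) ∂μ := by
  apply continuous_of_dominated (bound := fun _ => 1 / y)
  · intro x
    apply Continuous.aestronglyMeasurable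
    apply continuous_const.div (by fun_prop)
    intro u; positivity
  · intro x
    filter_upwards with u
    rw [Real.norm_of_nonneg (by positivity), div_le_div_iff₀ (by positivity) hy]
    nlinarith [sq_nonneg (u - x)]
  · exact integrable_const _
  · filter_upwards with u
    apply continuous_const.div (by fun_prop)
    intro x; positivity

lemma poisson_fubini {y : ℝ} (hy : 0 < y) (μ : Measure ℝ) [IsFiniteMeasure μ]
    {a b : ℝ} (hab : a < b) :
    (∫ x in a..b, ∫ u : ℝ, y / ((u - x) ^ 2 + y ^ 2) ∂μ) =
      ∫ u : ℝ, (arctan ((b - u) / y) - arctan ((a - u) / y)) ∂μ := by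
  rw [intervalIntegral.integral_of_le hab.le]
  rw [MeasureTheory.integral_integral_swap]
  · refine integral_congr_ae (Filter.Eventually.of_forall fun u => ?_)
    dsimp only
    rw [← intervalIntegral.integral_of_le hab.le, poisson_integral_x hy]
  · apply Integrable.mono' (integrable_const (1 / y))
    · apply Continuous.aestronglyMeasurable
      apply continuous_const.div (by fun_prop)
      intro p; positivity
    · filter_upwards with p
      rw [Function.uncurry]
      rw [Real.norm_of_nonneg (by positivity), div_le_div_iff₀ (by positivity) hy]
      nlinarith [sq_nonneg (p.2 - p.1)]

lemma key_tendsto (μ : Measure ℝ) [IsFiniteMeasure μ] {a b : ℝ} (hab : a < b) :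
    Filter.Tendsto (fun y : ℝ => ∫ x in a..b, ∫ u : ℝ, y / ((u - x) ^ 2 + y ^ 2) ∂μ)
      (nhdsWithin 0 (Set.Ioi 0))
      (nhds ((μ (Set.Ioo a b)).toReal * π + (μ {a}).toReal * (π / 2) +
        (μ {b}).toReal * (π / 2))) := by
  set g : ℝ → ℝ := fun u => (Set.Ioo a b).indicator (fun _ => π) u +
    ({a} : Set ℝ).indicator (fun _ => π / 2) u + ({b} : Set ℝ).indicator (fun _ => π / 2) u
    with hg
  have i1 : Integrable ((Set.Ioo a b).indicator fun _ => π) μ :=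
    (integrable_const π).indicator measurableSet_Ioo
  have i2 : Integrable (({a} : Set ℝ).indicator fun _ => (π / 2 : ℝ)) μ :=
    (integrable_const _).indicator (measurableSet_singleton a)
  have i3 : Integrable (({b} : Set ℝ).indicator fun _ => (π / 2 : ℝ)) μ :=
    (integrable_const _).indicator (measurableSet_singleton b)
  have hgint : ∫ u, g u ∂μ = (μ (Set.Ioo a b)).toReal * π + (μ {a}).toReal * (π / 2) +
      (μ {b}).toReal * (π / 2) := by
    rw [hg]
    dsimp only
    have i12 : Integrable (fun u => (Set.Ioo a b).indicator (fun _ => π) u +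
      ({a} : Set ℝ).indicator (fun _ => π / 2) u) μ := i1.add i2
    rw [MeasureTheory.integral_add i12 i3, MeasureTheory.integral_add i1 i2,
      integral_indicator_const _ measurableSet_Ioo,
      integral_indicator_const _ (measurableSet_singleton a),
      integral_indicator_const _ (measurableSet_singleton b)]
    simp [smul_eq_mul]
    rfl
  rw [← hgint]
  have hmain : Filter.Tendsto
      (fun y : ℝ => ∫ u : ℝ, (arctan ((b - u) / y) - arctan ((a - u) / y)) ∂μ)
      (nhdsWithin 0 (Set.Ioi 0)) (nhds (∫ u, g u ∂μ)) := by
    apply MeasureTheory.tendsto_integral_filter_of_dominated_convergence (bound := fun _ => π)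
    · filter_upwards with y
      exact (((Real.continuous_arctan.comp (by fun_prop)).sub
        (Real.continuous_arctan.comp (by fun_prop)))).aestronglyMeasurable
    · filter_upwards with y
      filter_upwards with u
      have h1 := Real.arctan_lt_pi_div_two ((b - u) / y)
      have h2 := Real.neg_pi_div_two_lt_arctan ((b - u) / y)
      have h3 := Real.arctan_lt_pi_div_two ((a - u) / y)
      have h4 := Real.neg_pi_div_two_lt_arctan ((a - u) / y)
      rw [Real.norm_eq_abs, abs_le]
      constructor <;> linarith [h1.le, h2.le, h3.le, h4.le]
    · exact integrable_const _
    · filter_upwards with u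
      rcases lt_trichotomy u a with h | h | h
      · have hgu : g u = 0 := by
          simp [hg, Set.indicator_apply, h.ne, (h.trans hab).ne, h.not_gt]
        rw [hgu]
        have T := (tendsto_arctan_div_pos' (c := b - u) (by linarith)).sub
          (tendsto_arctan_div_pos' (c := a - u) (by linarith))
        convert T using 2
        ring
      · subst h
        have hgu : g u = π / 2 := by
          simp [hg, Set.indicator_apply, hab.ne, lt_irrefl]
        rw [hgu]
        have T0 : Filter.Tendsto (fun y : ℝ => arctan ((u - u) / y))
            (nhdsWithin 0 (Set.Ioi 0)) (nhds 0) := by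
          simp only [sub_self, zero_div, Real.arctan_zero]
          exact tendsto_const_nhds
        have T := (tendsto_arctan_div_pos' (c := b - u) (by linarith)).sub T0
        convert T using 2
        ring
      · rcases lt_trichotomy u b with h' | h' | h'
        · have hgu : g u = π := by
            simp [hg, Set.indicator_apply, h, h', h.ne', h'.ne]
          rw [hgu]
          have T := (tendsto_arctan_div_pos' (c := b - u) (by linarith)).sub
            (tendsto_arctan_div_neg' (c := a - u) (by linarith))
          convert T using 2
          ring
        · subst h'
          have hgu : g u = π / 2 := by
            simp [hg, Set.indicator_apply, h.ne', lt_irrefl]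
          rw [hgu]
          have T0 : Filter.Tendsto (fun y : ℝ => arctan ((u - u) / y))
              (nhdsWithin 0 (Set.Ioi 0)) (nhds 0) := by
            simp only [sub_self, zero_div, Real.arctan_zero]
            exact tendsto_const_nhds
          have T := T0.sub (tendsto_arctan_div_neg' (c := a - u) (by linarith))
          convert T using 2
          ring
        · have hgu : g u = 0 := by
            simp [hg, Set.indicator_apply, h'.ne', (hab.trans h').ne', h'.not_gt]
          rw [hgu]
          have T := (tendsto_arctan_div_neg' (c := b - u) (by linarith)).sub
            (tendsto_arctan_div_neg' (c := a - u) (by linarith))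
          convert T using 2
          ring
  refine hmain.congr' ?_
  filter_upwards [self_mem_nhdsWithin] with y hy
  exact (poisson_fubini hy μ hab).symm

/-- Stieltjes–Perron inversion for a finite signed measure τ = τp − τm on
(0, ∞): if τ({a}) = τ({b}) = 0 for 0 < a < b, then
lim_{y→0⁺} (1/π) ∫_a^b ∫ y/((u−x)² + y²) dτ(u) dx = τ((a, b)). -/
theorem stieltjes_perron_inversion_signed
    (τp τm : Measure ℝ) [IsFiniteMeasure τp] [IsFiniteMeasure τm]
    (hτp : τp (Set.Iic 0) = 0) (hτm : τm (Set.Iic 0) = 0)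
    (a b : ℝ) (ha : 0 < a) (hab : a < b)
    (hat : τp {a} = τm {a}) (hbt : τp {b} = τm {b}) :
    Filter.Tendsto
      (fun y : ℝ =>
        (1 / Real.pi) *
          ∫ x in a..b,
            ((∫ u : ℝ, y / ((u - x) ^ 2 + y ^ 2) ∂τp) -
              (∫ u : ℝ, y / ((u - x) ^ 2 + y ^ 2) ∂τm)))
      (nhdsWithin 0 (Set.Ioi 0))
      (nhds ((τp (Set.Ioo a b)).toReal - (τm (Set.Ioo a b)).toReal)) := by
  have H := ((key_tendsto τp hab).sub (key_tendsto τm hab)).const_mul (1 / Real.pi)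
  have hval : (τp (Set.Ioo a b)).toReal - (τm (Set.Ioo a b)).toReal =
      (1 / Real.pi) * (((τp (Set.Ioo a b)).toReal * π + (τp {a}).toReal * (π / 2) +
          (τp {b}).toReal * (π / 2)) -
        ((τm (Set.Ioo a b)).toReal * π + (τm {a}).toReal * (π / 2) +
          (τm {b}).toReal * (π / 2))) := by
    rw [hat, hbt]
    field_simp
    ring
  rw [hval]
  refine H.congr' ?_
  filter_upwards [self_mem_nhdsWithin] with y hy
  have hy : (0:ℝ) < y := hy
  have ip := ((poisson_cont_in_x hy τp).intervalIntegrable (μ := volume) a b)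
  have im := ((poisson_cont_in_x hy τm).intervalIntegrable (μ := volume) a b)
  rw [intervalIntegral.integral_sub ip im]
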